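/- Suppose p₁, p₂, p₃, p₄ are nonzero vectors in a vector space V with p₂, p₃, p₄ linearly independent and Σᵢ aᵢ pᵢ = 0 for some all-nonzero reals aᵢ. If w₁, w₂, w₃, w₄ ∈ V satisfy Σᵢ pᵢ ⊗ wᵢ = 0 (as a tensor in V ⊗ V), then there exists w ∈ V with wᵢ = aᵢ w for all i. -/

import Mathlib

theorem tensor_vanishing_implies_proportional
    {V : Type*} [AddCommGroup V] [Module ℝ V] [FiniteDimensional ℝ V]
    (p₁ p₂ p₃ p₄ : V)
    (hp₁ : p₁ ≠ 0) (hp₂ : p₂ ≠ 0) (hp₃ : p₃ ≠ 0) (hp₄ : p₄ ≠ 0)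
    (hind : LinearIndependent ℝ ![p₂, p₃, p₄])
    (a₁ a₂ a₃ a₄ : ℝ)
    (ha₁ : a₁ ≠ 0) (ha₂ : a₂ ≠ 0) (ha₃ : a₃ ≠ 0) (ha₄ : a₄ ≠ 0)
    (ha : a₁ • p₁ + a₂ • p₂ + a₃ • p₃ + a₄ • p₄ = 0)
    (w₁ w₂ w₃ w₄ : V)
    (hQ : ∀ f : V →ₗ[ℝ] ℝ, f p₁ • w₁ + f p₂ • w₂ + f p₃ • w₃ + f p₄ • w₄ = 0) :
    ∃ w : V, w₁ = a₁ • w ∧ w₂ = a₂ • w ∧ w₃ = a₃ • w ∧ w₄ = a₄ • w := by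
  have key : ∀ i : Fin 3, ∃ f : V →ₗ[ℝ] ℝ,
      ∀ j : Fin 3, f (![p₂, p₃, p₄] j) = if i = j then 1 else 0 := by
    intro i
    classical
    have hsub : LinearIndepOn ℝ id (Set.range ![p₂, p₃, p₄]) :=
      hind.linearIndepOn_id
    have hm : ∀ j : Fin 3, ![p₂, p₃, p₄] j ∈ hsub.extend (Set.subset_univ _) :=
      fun j => hsub.subset_extend _ ⟨j, rfl⟩
    refine ⟨(Module.Basis.extend hsub).coord ⟨_, hm i⟩, fun j => ?_⟩
    have hBj : (![p₂, p₃, p₄] j) = (Module.Basis.extend hsub) ⟨_, hm j⟩ :=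
      (Module.Basis.extend_apply_self hsub ⟨_, hm j⟩).symm
    rw [hBj, Module.Basis.coord_apply, Module.Basis.repr_self, Finsupp.single_apply]
    by_cases h : i = j
    · subst h; simp
    · have : (⟨![p₂, p₃, p₄] j, hm j⟩ : hsub.extend (Set.subset_univ _)) ≠ ⟨![p₂, p₃, p₄] i, hm i⟩ := by
        simp only [ne_eq, Subtype.mk.injEq]
        exact fun hh => h (hind.injective hh).symm
      simp [this, h]
  obtain ⟨f₂, hf₂⟩ := key 0
  obtain ⟨f₃, hf₃⟩ := key 1
  obtain ⟨f₄, hf₄⟩ := key 2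
  have hfa : ∀ f : V →ₗ[ℝ] ℝ, a₁ * f p₁ + a₂ * f p₂ + a₃ * f p₃ + a₄ * f p₄ = 0 := by
    intro f
    have := congrArg f ha
    simpa [map_add, map_smul] using this
  have e22 : f₂ p₂ = 1 := by simpa using hf₂ 0
  have e23 : f₂ p₃ = 0 := by simpa using hf₂ 1
  have e24 : f₂ p₄ = 0 := by simpa using hf₂ 2
  have e32 : f₃ p₂ = 0 := by simpa using hf₃ 0
  have e33 : f₃ p₃ = 1 := by simpa using hf₃ 1
  have e34 : f₃ p₄ = 0 := by simpa using hf₃ 2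
  have e42 : f₄ p₂ = 0 := by simpa using hf₄ 0
  have e43 : f₄ p₃ = 0 := by simpa using hf₄ 1
  have e44 : f₄ p₄ = 1 := by simpa using hf₄ 2
  have h21 : f₂ p₁ = -a₂ / a₁ := by
    have := hfa f₂; rw [e22, e23, e24] at this; field_simp at this ⊢; linarith
  have h31 : f₃ p₁ = -a₃ / a₁ := by
    have := hfa f₃; rw [e32, e33, e34] at this; field_simp at this ⊢; linarith
  have h41 : f₄ p₁ = -a₄ / a₁ := by
    have := hfa f₄; rw [e42, e43, e44] at this; field_simp at this ⊢; linarith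
  have hw2 : w₂ = (a₂ / a₁) • w₁ := by
    have := hQ f₂
    rw [h21, e22, e23, e24] at this
    simp only [one_smul, zero_smul, add_zero] at this
    have : w₂ = -((-a₂ / a₁) • w₁) := by linear_combination (norm := module) this
    rw [this]; module
  have hw3 : w₃ = (a₃ / a₁) • w₁ := by
    have := hQ f₃
    rw [h31, e32, e33, e34] at this
    simp only [one_smul, zero_smul, add_zero, zero_add] at this
    have : w₃ = -((-a₃ / a₁) • w₁) := by linear_combination (norm := module) this
    rw [this]; module
  have hw4 : w₄ = (a₄ / a₁) • w₁ := by
    have := hQ f₄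
    rw [h41, e42, e43, e44] at this
    simp only [one_smul, zero_smul, add_zero, zero_add] at this
    have : w₄ = -((-a₄ / a₁) • w₁) := by linear_combination (norm := module) this
    rw [this]; module
  refine ⟨a₁⁻¹ • w₁, ?_, ?_, ?_, ?_⟩
  · rw [smul_smul, mul_inv_cancel₀ ha₁, one_smul]
  · rw [hw2, smul_smul, div_eq_mul_inv]
  · rw [hw3, smul_smul, div_eq_mul_inv]
  · rw [hw4, smul_smul, div_eq_mul_inv]
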